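/- For each n ∈ ℕ, λ̃ₙ = (2nπ)^p is a 1-periodic eigenvalue of the vectorial p-Laplacian in ℝ²: the function x(t) = Ã (cos(2nπ(t+φ₀)), sin(2nπ(t+φ₀))), for any Ã > 0 and φ₀ ∈ ℝ, is a nonzero 1-periodic solution of (φ_p(ẋ))' + λ̃ₙ φ_p(x) = 0. -/

import Mathlib

open Real

lemma hasDerivAt_euclid2 {f : ℝ → EuclideanSpace ℝ (Fin 2)} {v : EuclideanSpace ℝ (Fin 2)} {t : ℝ}
    (h0 : HasDerivAt (fun s => f s 0) (v 0) t) (h1 : HasDerivAt (fun s => f s 1) (v 1) t) :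
    HasDerivAt f v t := by
  have h : ∀ i, HasDerivAt (fun s => f s i) (v i) t := by
    intro i; fin_cases i
    · exact h0
    · exact h1
  have h1 : HasDerivAt (fun s => (fun i => f s i : Fin 2 → ℝ)) (fun i => v i) t := hasDerivAt_pi.2 h
  exact ((PiLp.continuousLinearEquiv 2 ℝ (fun _ : Fin 2 => ℝ)).symm.toContinuousLinearMap.hasFDerivAt).comp_hasDerivAt t h1

lemma euclid_ext {a b : EuclideanSpace ℝ (Fin 2)} (h0 : a 0 = b 0) (h1 : a 1 = b 1) : a = b := by
  ext i; fin_cases i <;> assumption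

theorem circular_eigenfunctions (p : ℝ) (hp : 1 < p) (n : ℕ) (hn : 1 ≤ n)
    (A φ₀ : ℝ) (hA : 0 < A)
    (x : ℝ → EuclideanSpace ℝ (Fin 2))
    (hx0 : ∀ t, x t 0 = A * Real.cos (2 * n * π * (t + φ₀)))
    (hx1 : ∀ t, x t 1 = A * Real.sin (2 * n * π * (t + φ₀))) :
    (∀ t, x t ≠ 0) ∧
    (∀ t, x (t + 1) = x t) ∧
    ∃ x' : ℝ → EuclideanSpace ℝ (Fin 2),
      (∀ t, HasDerivAt x (x' t) t) ∧
      (∀ t, HasDerivAt (fun s => ‖x' s‖ ^ (p - 2) • x' s)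
        (-(((2 * n * π) ^ p) • (‖x t‖ ^ (p - 2) • x t))) t) := by
  have hn' : (1:ℝ) ≤ n := by exact_mod_cast hn
  have hπ := pi_pos
  set ω : ℝ := 2 * n * π with hωdef
  have hω : 0 < ω := by rw [hωdef]; nlinarith
  have hnormx : ∀ t, ‖x t‖ = A := by
    intro t
    have h : ‖x t 0‖^2 + ‖x t 1‖^2 = A^2 := by
      rw [hx0, hx1, Real.norm_eq_abs, Real.norm_eq_abs, sq_abs, sq_abs]
      nlinarith [sin_sq_add_cos_sq (ω*(t+φ₀))]
    rw [EuclideanSpace.norm_eq, Fin.sum_univ_two, h, Real.sqrt_sq hA.le]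
  refine ⟨?_, ?_, ?_⟩
  · intro t h
    have := hnormx t
    rw [h, norm_zero] at this
    linarith
  · intro t
    have harg : ω * (t + 1 + φ₀) = ω * (t + φ₀) + n * (2*π) := by rw [hωdef]; ring
    apply euclid_ext
    · rw [hx0, hx0, harg, Real.cos_add_nat_mul_two_pi]
    · rw [hx1, hx1, harg, Real.sin_add_nat_mul_two_pi]
  have hu : ∀ t, HasDerivAt (fun s => ω * (s + φ₀)) ω t := by
    intro t
    simpa using ((hasDerivAt_id t).add_const φ₀).const_mul ω
  have hc : ∀ (c : ℝ) (t : ℝ), HasDerivAt (fun s => c * Real.cos (ω*(s+φ₀)))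
      (-(c * ω * Real.sin (ω*(t+φ₀)))) t := by
    intro c t
    have h1 := ((Real.hasDerivAt_cos (ω*(t+φ₀))).comp t (hu t)).const_mul c
    simp only [Function.comp_def] at h1
    exact h1.congr_deriv (by ring)
  have hsn : ∀ (c : ℝ) (t : ℝ), HasDerivAt (fun s => c * Real.sin (ω*(s+φ₀)))
      (c * ω * Real.cos (ω*(t+φ₀))) t := by
    intro c t
    have h1 := ((Real.hasDerivAt_sin (ω*(t+φ₀))).comp t (hu t)).const_mul c
    simp only [Function.comp_def] at h1
    exact h1.congr_deriv (by ring)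
  set X' : ℝ → EuclideanSpace ℝ (Fin 2) :=
    fun t => (WithLp.equiv 2 (Fin 2 → ℝ)).symm
      ![-(A * ω * Real.sin (ω*(t+φ₀))), A * ω * Real.cos (ω*(t+φ₀))] with hX'
  have hX'0 : ∀ t, X' t 0 = -(A * ω * Real.sin (ω*(t+φ₀))) := by
    intro t; simp [hX']
  have hX'1 : ∀ t, X' t 1 = A * ω * Real.cos (ω*(t+φ₀)) := by
    intro t; simp [hX']
  have hnormX' : ∀ t, ‖X' t‖ = A * ω := by
    intro t
    have h : ‖X' t 0‖^2 + ‖X' t 1‖^2 = (A*ω)^2 := by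
      rw [hX'0, hX'1, Real.norm_eq_abs, Real.norm_eq_abs, sq_abs, sq_abs]
      nlinarith [sin_sq_add_cos_sq (ω*(t+φ₀))]
    rw [EuclideanSpace.norm_eq, Fin.sum_univ_two, h, Real.sqrt_sq (by positivity)]
  refine ⟨X', ?_, ?_⟩
  · intro t
    apply hasDerivAt_euclid2
    · rw [hX'0]
      simp only [hx0]
      exact hc A t
    · rw [hX'1]
      simp only [hx1]
      exact hsn A t
  · intro t
    simp only [hnormX']
    have h2 : ω ^ p = ω^(p-2) * (ω * ω) := by
      have e1 : ω ^ p = ω ^ (p - 2 + 2) := by norm_num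
      rw [e1, Real.rpow_add hω, show (2:ℝ) = ((2:ℕ):ℝ) by norm_num, Real.rpow_natCast]
      ring
    have hkey : (A*ω)^(p-2) * (A * ω * ω) = ω ^ p * (A ^ (p-2) * A) := by
      rw [Real.mul_rpow hA.le hω.le, h2]; ring
    apply hasDerivAt_euclid2
    · have hfun : (fun s => (((A*ω)^(p-2) : ℝ) • X' s) 0)
          = fun s => (-((A*ω)^(p-2) * (A*ω))) * Real.sin (ω*(s+φ₀)) := by
        funext s; simp only [PiLp.smul_apply, smul_eq_mul, hX'0]; ring
      have hv0 : (-((ω:ℝ)^p • (‖x t‖^(p-2) • x t))) 0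
          = (-((A*ω)^(p-2) * (A*ω))) * ω * Real.cos (ω*(t+φ₀)) := by
        simp only [PiLp.neg_apply, PiLp.smul_apply, smul_eq_mul, hnormx, hx0]
        linear_combination (Real.cos (ω*(t+φ₀))) * hkey
      rw [hfun, hv0]
      exact hsn _ t
    · have hfun : (fun s => (((A*ω)^(p-2) : ℝ) • X' s) 1)
          = fun s => ((A*ω)^(p-2) * (A*ω)) * Real.cos (ω*(s+φ₀)) := by
        funext s; simp only [PiLp.smul_apply, smul_eq_mul, hX'1]; ring
      have hv1 : (-((ω:ℝ)^p • (‖x t‖^(p-2) • x t))) 1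
          = -(((A*ω)^(p-2) * (A*ω)) * ω * Real.sin (ω*(t+φ₀))) := by
        simp only [PiLp.neg_apply, PiLp.smul_apply, smul_eq_mul, hnormx, hx1]
        linear_combination (Real.sin (ω*(t+φ₀))) * hkey
      rw [hfun, hv1]
      exact hc _ t
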